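/- Let p ≡ 1 (mod 4) be a prime, let K ≤ (p+1)/2 and 0 ≤ δ < 1, and suppose the Paley matrix Φ_p has the (K, δ)-restricted isometry property. Then every clique S of the Paley graph G_p with |S| ≤ K satisfies |S| ≤ δ·√p + 1. -/

import Mathlib

open Finset

/-- Quadratic character of `ZMod p`. -/
noncomputable def paleyChar (p : ℕ) (x : ZMod p) : ℤ :=
  open Classical in
  if x = 0 then 0 else if IsSquare x then 1 else -1

/-- Canonical additive character of `ZMod p`. -/
noncomputable def paleyPsi (p : ℕ) (x : ZMod p) : ℂ :=
  Complex.exp (2 * Real.pi * Complex.I * (x.val : ℂ) / p)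

/-- The Paley matrix with respect to a labelling `a` of `𝔽_p` and a labelling `b` of the
nonzero quadratic residues.  It has `(p-1)/2 + 1 = (p+1)/2` rows and `p + 1` columns. -/
noncomputable def paleyMatrix (p : ℕ) (a : Fin p → ZMod p) (b : Fin ((p - 1) / 2) → ZMod p) :
    Matrix (Fin ((p - 1) / 2 + 1)) (Fin (p + 1)) ℂ := fun i j =>
  Fin.cases
    (if (j : ℕ) < p then (1 : ℂ) / Real.sqrt p
     else Complex.I ^ (if p % 4 = 3 then 1 else 0))
    (fun k =>
      if hj : (j : ℕ) < p then (Real.sqrt (2 / p) : ℂ) * paleyPsi p (b k * a ⟨j, hj⟩)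
      else 0) i

/-- `x` has at most `K` nonzero entries. -/
def SparseLe {N : ℕ} (K : ℕ) (x : Fin N → ℂ) : Prop :=
  ∃ s : Finset (Fin N), s.card ≤ K ∧ ∀ j ∉ s, x j = 0

/-- The `(K, δ)`-restricted isometry property. -/
def RIP {M N : ℕ} (Φ : Matrix (Fin M) (Fin N) ℂ) (K : ℕ) (δ : ℝ) : Prop :=
  ∀ x : Fin N → ℂ, SparseLe K x →
    (1 - δ) * ∑ j, ‖x j‖ ^ 2 ≤ ∑ m, ‖∑ j, Φ m j * x j‖ ^ 2 ∧
      ∑ m, ‖∑ j, Φ m j * x j‖ ^ 2 ≤ (1 + δ) * ∑ j, ‖x j‖ ^ 2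

/-! ### Auxiliary lemmas -/

noncomputable def stdChar (p : ℕ) [NeZero p] : AddChar (ZMod p) ℂ :=
  AddChar.zmodChar p ((Complex.isPrimitiveRoot_exp p (NeZero.ne p)).pow_eq_one)

lemma paleyPsi_eq_stdChar (p : ℕ) [NeZero p] (x : ZMod p) :
    paleyPsi p x = stdChar p x := by
  rw [stdChar, AddChar.zmodChar_apply, ← Complex.exp_nat_mul, paleyPsi]
  ring_nf

lemma stdChar_primitive (p : ℕ) [NeZero p] : (stdChar p).IsPrimitive :=
  AddChar.zmodChar_primitive_of_primitive_root p (Complex.isPrimitiveRoot_exp p (NeZero.ne p))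

lemma stdChar_ne_one (p : ℕ) [Fact p.Prime] : stdChar p ≠ 1 := by
  intro h
  have h1 : stdChar p 1 = 1 := by rw [h]; rfl
  have := ((stdChar_primitive p).zmod_char_eq_one_iff p (1 : ZMod p)).mp h1
  exact one_ne_zero this

lemma stdChar_sum_zero (p : ℕ) [Fact p.Prime] : ∑ x : ZMod p, stdChar p x = 0 := by
  refine AddChar.sum_eq_zero_iff_ne_zero.mpr ?_
  rw [← AddChar.one_eq_zero]
  exact stdChar_ne_one p

lemma conj_stdChar (p : ℕ) [NeZero p] (x : ZMod p) :
    (starRingEnd ℂ) (stdChar p x) = stdChar p (-x) := by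
  have h1 : stdChar p x * stdChar p (-x) = 1 := by
    rw [← AddChar.map_add_eq_mul, add_neg_cancel, AddChar.map_zero_eq_one]
  have h2 : (starRingEnd ℂ) (stdChar p x) * stdChar p x = 1 := by
    rw [stdChar, AddChar.zmodChar_apply, map_pow, ← mul_pow]
    rw [← Complex.exp_conj, ← Complex.exp_add]
    have : (starRingEnd ℂ) (2 * (Real.pi:ℂ) * Complex.I / p)
        = -(2 * (Real.pi:ℂ) * Complex.I / p) := by
      simp [map_div₀, Complex.conj_I, map_ofNat]
      ring
    rw [this, neg_add_cancel, Complex.exp_zero, one_pow]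
  calc (starRingEnd ℂ) (stdChar p x)
      = (starRingEnd ℂ) (stdChar p x) * (stdChar p x * stdChar p (-x)) := by
        rw [h1, mul_one]
    _ = ((starRingEnd ℂ) (stdChar p x) * stdChar p x) * stdChar p (-x) := by ring
    _ = stdChar p (-x) := by rw [h2, one_mul]


noncomputable def QRf (p : ℕ) [NeZero p] : Finset (ZMod p) :=
  open Classical in Finset.univ.filter (fun x => x ≠ 0 ∧ IsSquare x)

lemma mem_QRf {p : ℕ} [NeZero p] {x : ZMod p} : x ∈ QRf p ↔ x ≠ 0 ∧ IsSquare x := by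
  simp [QRf]

noncomputable def qChar (p : ℕ) [Fact p.Prime] : MulChar (ZMod p) ℂ :=
  (quadraticChar (ZMod p)).ringHomComp (Int.castRingHom ℂ)

lemma ringChar_ne_two (p : ℕ) [Fact p.Prime] (hp4 : p % 4 = 1) : ringChar (ZMod p) ≠ 2 := by
  rw [ZMod.ringChar_zmod_n]
  omega

lemma gauss_sq (p : ℕ) [Fact p.Prime] (hp4 : p % 4 = 1) :
    (gaussSum (qChar p) (stdChar p)) ^ 2 = (p : ℂ) := by
  have hne : qChar p ≠ 1 :=
    (MulChar.ringHomComp_ne_one_iff (Int.cast_injective (α := ℂ))).mpr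
      (quadraticChar_ne_one (ringChar_ne_two p hp4))
  have hq : (qChar p).IsQuadratic := (quadraticChar_isQuadratic (ZMod p)).comp _
  rw [gaussSum_sq hne hq (stdChar_primitive p)]
  have : qChar p (-1) = (((quadraticChar (ZMod p)) (-1) : ℤ) : ℂ) := rfl
  rw [this, quadraticChar_neg_one (ringChar_ne_two p hp4), ZMod.card p,
    ZMod.χ₄_nat_one_mod_four hp4]
  simp

lemma gauss_eq (p : ℕ) [Fact p.Prime] (hp4 : p % 4 = 1) :
    gaussSum (qChar p) (stdChar p) = 2 * (∑ c ∈ QRf p, stdChar p c) + 1 := by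
  classical
  have hpt : ∀ x : ZMod p, qChar p x * stdChar p x + stdChar p x =
      (if x ∈ QRf p then 2 * stdChar p x else if x = 0 then 1 else 0) := by
    intro x
    have hq : qChar p x = (((quadraticChar (ZMod p)) x : ℤ) : ℂ) := rfl
    by_cases h0 : x = 0
    · subst h0
      rw [hq, quadraticChar_zero]
      simp [mem_QRf]
    · by_cases hsq : IsSquare x
      · rw [hq, (quadraticChar_one_iff_isSquare h0).mpr hsq]
        rw [if_pos (mem_QRf.mpr ⟨h0, hsq⟩)]
        push_cast
        ring
      · rw [hq, quadraticChar_neg_one_iff_not_isSquare.mpr hsq]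
        rw [if_neg (fun h => hsq (mem_QRf.mp h).2)]
        rw [if_neg h0]
        push_cast
        ring
  have h1 : gaussSum (qChar p) (stdChar p) =
      ∑ x : ZMod p, (qChar p x * stdChar p x + stdChar p x) := by
    rw [Finset.sum_add_distrib, stdChar_sum_zero p, add_zero]
    rfl
  rw [h1, Finset.sum_congr rfl (fun x _ => hpt x), Finset.sum_ite]
  rw [Finset.filter_mem_eq_inter, Finset.univ_inter, Finset.mul_sum]
  congr 1
  rw [Finset.sum_ite_eq' _ (0 : ZMod p) (fun _ => (1 : ℂ))]
  rw [if_pos]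
  simp [mem_QRf]

lemma QRf_shift (p : ℕ) [Fact p.Prime] {d : ZMod p} (hd0 : d ≠ 0) (hds : IsSquare d) :
    ∑ c ∈ QRf p, stdChar p (c * d) = ∑ c ∈ QRf p, stdChar p c := by
  refine Finset.sum_nbij' (fun c => c * d) (fun c => c * d⁻¹) ?_ ?_ ?_ ?_ ?_
  · intro c hc
    obtain ⟨hc0, hcs⟩ := mem_QRf.mp hc
    exact mem_QRf.mpr ⟨mul_ne_zero hc0 hd0, hcs.mul hds⟩
  · intro c hc
    obtain ⟨hc0, hcs⟩ := mem_QRf.mp hc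
    refine mem_QRf.mpr ⟨mul_ne_zero hc0 (inv_ne_zero hd0), hcs.mul ?_⟩
    obtain ⟨r, hr⟩ := hds
    exact ⟨r⁻¹, by rw [hr, mul_inv]⟩
  · intro c _
    field_simp
  · intro c _
    field_simp
  · intro c _
    rfl


lemma sum_fin_succ_eq {M : Type*} [AddCommMonoid M] {p : ℕ} [NeZero p] (a : Fin p → ZMod p)
    (ha : Function.Bijective a) (f : ZMod p → M) :
    ∑ j : Fin (p+1), (if h : (j:ℕ) < p then f (a ⟨j, h⟩) else 0) = ∑ v : ZMod p, f v := by
  rw [Fin.sum_univ_castSucc]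
  have hlast : ¬ ((Fin.last p : ℕ) < p) := by simp
  rw [dif_neg hlast, add_zero]
  have h1 : ∀ i : Fin p, (if h : ((Fin.castSucc i : Fin (p+1)) : ℕ) < p
      then f (a ⟨((Fin.castSucc i : Fin (p+1)) : ℕ), h⟩) else 0) = f (a i) := by
    intro i
    rw [dif_pos (by simpa using i.isLt)]
    rfl
  rw [Finset.sum_congr rfl (fun i _ => h1 i)]
  exact ha.sum_comp f

set_option maxHeartbeats 1000000 in
theorem rip_implies_clique_bound (p : ℕ) [Fact p.Prime] (hp4 : p % 4 = 1)
    (a : Fin p → ZMod p) (ha : Function.Bijective a) (ha0 : a 0 = 0)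
    (b : Fin ((p - 1) / 2) → ZMod p) (hb : Function.Injective b)
    (hbr : Set.range b = {x : ZMod p | x ≠ 0 ∧ IsSquare x})
    (K : ℕ) (δ : ℝ) (hK : K ≤ (p + 1) / 2) (hδ0 : 0 ≤ δ) (hδ1 : δ < 1)
    (hRIP : RIP (paleyMatrix p a b) K δ) :
    ∀ S : Finset (ZMod p),
      (∀ x ∈ S, ∀ y ∈ S, x ≠ y → paleyChar p (x - y) = 1) →
      S.card ≤ K → (S.card : ℝ) ≤ δ * Real.sqrt p + 1 := by
  classical
  intro S hclique hcard
  have hp : p.Prime := Fact.out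
  have hp5 : 5 ≤ p := by have := hp.two_le; omega
  have hp0 : (0:ℝ) < p := by exact_mod_cast Nat.lt_of_lt_of_le (by norm_num) hp5
  have hsqp : (0:ℝ) < Real.sqrt p := Real.sqrt_pos.mpr hp0
  have hsqsq : Real.sqrt p * Real.sqrt p = (p:ℝ) := Real.mul_self_sqrt hp0.le
  by_cases hS0 : S = ∅
  · rw [hS0]
    simp only [Finset.card_empty, Nat.cast_zero]
    positivity
  have hSne : S.Nonempty := Finset.nonempty_iff_ne_empty.mpr hS0
  have ht1 : 1 ≤ S.card := Finset.card_pos.mpr hSne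
  have ht1R : (1:ℝ) ≤ (S.card:ℝ) := by exact_mod_cast ht1
  set x : Fin (p+1) → ℂ :=
    fun j => if h : (j:ℕ) < p then (if a ⟨j, h⟩ ∈ S then 1 else 0) else 0 with hxdef
  have hxsp : SparseLe K x := by
    refine ⟨S.image (fun v => Fin.castSucc ((Equiv.ofBijective a ha).symm v)),
      le_trans Finset.card_image_le hcard, ?_⟩
    intro j hj
    by_cases hlt : (j:ℕ) < p
    · rw [hxdef]
      simp only [dif_pos hlt]
      rw [if_neg]
      intro hmem
      apply hj
      refine Finset.mem_image.mpr ⟨a ⟨j, hlt⟩, hmem, ?_⟩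
      have h2 : (Equiv.ofBijective a ha).symm (a ⟨j, hlt⟩) = ⟨j, hlt⟩ := by
        rw [Equiv.symm_apply_eq]; rfl
      rw [h2]
      ext
      simp
    · rw [hxdef]; simp [hlt]
  obtain ⟨hlow, hupp⟩ := hRIP x hxsp
  -- the norm of x
  have hnormx : ∑ j, ‖x j‖ ^ 2 = (S.card : ℝ) := by
    have h1 : ∀ j : Fin (p+1), ‖x j‖ ^ 2 =
        (if h : (j:ℕ) < p then (if a ⟨j,h⟩ ∈ S then (1:ℝ) else 0) else 0) := by
      intro j; rw [hxdef]
      by_cases h : (j:ℕ) < p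
      · simp only [dif_pos h]; split_ifs <;> simp
      · simp only [dif_neg h]; simp
    rw [Finset.sum_congr rfl (fun j _ => h1 j),
      sum_fin_succ_eq a ha (fun v => if v ∈ S then (1:ℝ) else 0),
      Finset.sum_boole, Finset.filter_mem_eq_inter, Finset.univ_inter]
  -- the rows
  set T : Fin ((p-1)/2) → ℂ := fun k => ∑ v ∈ S, stdChar p (b k * v) with hTdef
  have hrow0 : ∑ j, paleyMatrix p a b 0 j * x j = ((1:ℂ) / Real.sqrt p) * (S.card : ℂ) := by
    have h1 : ∀ j : Fin (p+1), paleyMatrix p a b 0 j * x j =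
        (if h : (j:ℕ) < p then
          (if a ⟨j,h⟩ ∈ S then ((1 : ℂ)/Real.sqrt p) else 0) else 0) := by
      intro j
      rw [hxdef]
      simp only [paleyMatrix, Fin.cases_zero]
      by_cases h : (j:ℕ) < p
      · simp only [dif_pos h, if_pos h]
        split_ifs <;> simp
      · simp [h]
    rw [Finset.sum_congr rfl (fun j _ => h1 j),
      sum_fin_succ_eq a ha (fun v => if v ∈ S then ((1 : ℂ)/Real.sqrt p) else 0),
      Finset.sum_ite_mem, Finset.univ_inter, Finset.sum_const, nsmul_eq_mul]
    ring
  have hrowk : ∀ k : Fin ((p-1)/2), ∑ j, paleyMatrix p a b k.succ j * x j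
      = (Real.sqrt (2/p) : ℂ) * T k := by
    intro k
    have h1 : ∀ j : Fin (p+1), paleyMatrix p a b k.succ j * x j =
        (if h : (j:ℕ) < p then (if a ⟨j,h⟩ ∈ S then
          (Real.sqrt (2/p):ℂ) * stdChar p (b k * a ⟨j,h⟩) else 0) else 0) := by
      intro j
      rw [hxdef]
      simp only [paleyMatrix, Fin.cases_succ]
      by_cases h : (j:ℕ) < p
      · simp only [dif_pos h, paleyPsi_eq_stdChar]
        split_ifs <;> simp
      · simp [h]
    rw [Finset.sum_congr rfl (fun j _ => h1 j),
      sum_fin_succ_eq a ha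
        (fun v => if v ∈ S then (Real.sqrt (2/p):ℂ) * stdChar p (b k * v) else 0),
      Finset.sum_ite_mem, Finset.univ_inter, hTdef, Finset.mul_sum]
  -- reindex sums over b
  have hbsum : ∀ g : ZMod p → ℂ, ∑ k, g (b k) = ∑ c ∈ QRf p, g c := by
    intro g
    have himg : Finset.univ.image b = QRf p := by
      ext c
      simp only [Finset.mem_image, Finset.mem_univ, true_and, mem_QRf]
      constructor
      · rintro ⟨k, rfl⟩
        have h := Set.mem_range_self (f := b) k
        rw [hbr] at h
        exact h
      · intro hc
        have h : c ∈ Set.range b := by rw [hbr]; exact hc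
        exact h
    rw [← himg, Finset.sum_image (fun k _ l _ h => hb h)]
  set Gd : ℂ := ∑ c ∈ QRf p, stdChar p c with hGddef
  have hinner : ∀ v ∈ S, ∀ w ∈ S, v ≠ w →
      ∑ k, stdChar p (b k * (v - w)) = Gd := by
    intro v hv w hw hvw
    have hpc := hclique v hv w hw hvw
    have hd0 : v - w ≠ 0 := sub_ne_zero_of_ne hvw
    have hds : IsSquare (v - w) := by
      by_contra hns
      rw [paleyChar, if_neg hd0, if_neg hns] at hpc
      norm_num at hpc
    rw [hbsum (fun c => stdChar p (c * (v - w)))]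
    exact QRf_shift p hd0 hds
  have hTT : ∑ k, (T k * (starRingEnd ℂ) (T k)) =
      (S.card : ℂ) * (((p-1)/2 : ℕ) : ℂ) + (S.card : ℂ) * ((S.card : ℂ) - 1) * Gd := by
    have h2 : ∀ k, T k * (starRingEnd ℂ) (T k) =
        ∑ v ∈ S, ∑ w ∈ S, stdChar p (b k * (v - w)) := by
      intro k
      rw [hTdef]
      simp only
      rw [map_sum, Finset.sum_mul_sum]
      refine Finset.sum_congr rfl (fun v _ => Finset.sum_congr rfl (fun w _ => ?_))
      rw [conj_stdChar, ← AddChar.map_add_eq_mul]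
      congr 1
      ring
    rw [Finset.sum_congr rfl (fun k _ => h2 k), Finset.sum_comm]
    have h3 : ∀ v ∈ S, ∑ k, ∑ w ∈ S, stdChar p (b k * (v - w))
        = (((p-1)/2 : ℕ) : ℂ) + ((S.card : ℂ) - 1) * Gd := by
      intro v hv
      rw [Finset.sum_comm]
      have h4 : ∀ w ∈ S, ∑ k, stdChar p (b k * (v - w)) =
          if w = v then (((p-1)/2 : ℕ) : ℂ) else Gd := by
        intro w hw
        by_cases hvw : w = v
        · subst hvw
          rw [if_pos rfl]
          simp only [sub_self, mul_zero, AddChar.map_zero_eq_one]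
          rw [Finset.sum_const, Finset.card_univ, Fintype.card_fin, nsmul_eq_mul, mul_one]
        · rw [if_neg hvw]
          exact hinner v hv w hw (fun h => hvw h.symm)
      rw [Finset.sum_congr rfl h4, ← Finset.add_sum_erase _ _ hv, if_pos rfl]
      congr 1
      have h5 : ∀ w ∈ S.erase v, (if w = v then (((p-1)/2 : ℕ) : ℂ) else Gd) = Gd := by
        intro w hw
        rw [if_neg (Finset.ne_of_mem_erase hw)]
      rw [Finset.sum_congr rfl h5, Finset.sum_const, Finset.card_erase_of_mem hv,
        nsmul_eq_mul, Nat.cast_sub ht1, Nat.cast_one]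
    rw [Finset.sum_congr rfl h3, Finset.sum_const, nsmul_eq_mul]
    ring
  -- the Gauss sum is a real number of square p
  set g : ℂ := gaussSum (qChar p) (stdChar p) with hgdef
  have hgsq : g ^ 2 = (p:ℂ) := gauss_sq p hp4
  have hgeq : g = 2 * Gd + 1 := gauss_eq p hp4
  have hgim : g.im = 0 := by
    have h1 : (g*g).im = 0 := by rw [← sq, hgsq]; simp
    rw [Complex.mul_im] at h1
    have h2 : (g*g).re = (p:ℝ) := by rw [← sq, hgsq]; simp
    rw [Complex.mul_re] at h2
    rcases mul_eq_zero.mp (by linarith : g.re * g.im = 0) with h | h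
    · nlinarith [hp0]
    · exact h
  set gr : ℝ := g.re with hgrdef
  have hgreal : g = (gr : ℂ) := by
    apply Complex.ext
    · rfl
    · simp [hgim]
  have hgr2 : gr ^ 2 = (p:ℝ) := by
    have h := hgsq
    rw [hgreal] at h
    exact_mod_cast h
  have hGd : Gd = (((gr - 1)/2 : ℝ) : ℂ) := by
    have h : (2:ℂ) * Gd = (gr:ℂ) - 1 := by rw [← hgreal, hgeq]; ring
    push_cast
    linear_combination h / 2
  -- the sum of |T k|^2
  have hTabs : ∑ k, ‖T k‖ ^ 2
      = (S.card : ℝ) * (((p-1)/2 : ℕ) : ℝ)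
        + (S.card : ℝ) * ((S.card : ℝ) - 1) * ((gr - 1)/2) := by
    have h1 : ((∑ k, ‖T k‖ ^ 2 : ℝ) : ℂ)
        = ∑ k, (T k * (starRingEnd ℂ) (T k)) := by
      rw [Complex.ofReal_sum]
      refine Finset.sum_congr rfl (fun k _ => ?_)
      rw [Complex.sq_norm, Complex.mul_conj]
    rw [hTT, hGd] at h1
    exact_mod_cast h1
  -- the total squared norm of Φ x
  have hsum_abs : ∑ m, ‖∑ j, paleyMatrix p a b m j * x j‖ ^ 2
      = (S.card:ℝ)^2 / p + (2/p) * (∑ k, ‖T k‖ ^ 2) := by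
    rw [Fin.sum_univ_succ]
    congr 1
    · rw [hrow0, norm_mul, norm_div, norm_one, Complex.norm_real, Real.norm_eq_abs, Complex.norm_natCast,
        abs_of_nonneg hsqp.le, mul_pow, div_pow, one_pow, Real.sq_sqrt hp0.le]
      ring
    · rw [Finset.mul_sum]
      refine Finset.sum_congr rfl (fun k _ => ?_)
      rw [hrowk k, norm_mul, Complex.norm_real, Real.norm_eq_abs, abs_of_nonneg (Real.sqrt_nonneg _),
        mul_pow, Real.sq_sqrt (by positivity : (0:ℝ) ≤ 2/p)]
  -- put it together
  have hC : (((p-1)/2 : ℕ) : ℝ) = ((p:ℝ) - 1)/2 := by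
    have h2 : ((p-1)/2 : ℕ) * 2 = p - 1 := by omega
    have h3 := congrArg (fun n : ℕ => (n:ℝ)) h2
    push_cast [Nat.cast_sub (by omega : 1 ≤ p)] at h3
    linarith
  set t : ℝ := (S.card : ℝ) with htdef
  have hE : ∑ m, ‖∑ j, paleyMatrix p a b m j * x j‖ ^ 2
      = t + t*(t-1)*gr/(p:ℝ) := by
    rw [hsum_abs, hTabs, hC]
    field_simp
    ring
  rw [hE, hnormx] at hupp hlow
  have h1 : t*(t-1)*gr/(p:ℝ) ≤ δ*t := by linarith
  have hub : t*(t-1)*gr ≤ δ * t * p := by rwa [div_le_iff₀ hp0] at h1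
  have h2 : -(δ*t) ≤ t*(t-1)*gr/(p:ℝ) := by linarith
  have hlb : -(δ * t * p) ≤ t*(t-1)*gr := by
    rw [le_div_iff₀ hp0] at h2
    linarith
  have hcase : (gr - Real.sqrt p) * (gr + Real.sqrt p) = 0 := by nlinarith [hgr2, hsqsq]
  have htpos : (0:ℝ) < t := lt_of_lt_of_le zero_lt_one ht1R
  rcases mul_eq_zero.mp hcase with h | h
  · have hgr : gr = Real.sqrt p := by linarith
    rw [hgr] at hub
    nlinarith [mul_pos htpos hsqp, hsqsq]
  · have hgr : gr = -Real.sqrt p := by linarith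
    rw [hgr] at hlb
    nlinarith [mul_pos htpos hsqp, hsqsq]
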